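/- Let ψ ∈ (ℂ^d)^{⊗N} have a TI MPS representation by D×D matrices A_i satisfying ∑_i A_i A_i† = 1 and condition C1 with parameter L_0 < N. Then for every cut of the ring into two blocks of consecutive sites [1…R] and [R+1…N] with R ≥ L_0 and N−R ≥ L_0, the d^R × d^{N−R} matrix M with entries M[(i_1,…,i_R),(i_{R+1},…,i_N)] = c(i_1,…,i_N) has rank exactly D²; equivalently, the reduced density operator of ψ on sites 1,…,R has rank exactly D². -/

import Mathlib

open scoped Matrix

/-- Coefficient of a translationally invariant MPS with site-independent matrices. -/
noncomputable def tiCoeff {d D N : ℕ} (A : Fin d → Matrix (Fin D) (Fin D) ℂ)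
    (i : Fin N → Fin d) : ℂ :=
  Matrix.trace (List.ofFn fun k => A (i k)).prod

/-- Span of length-`L` products. -/
noncomputable def prodSpan {d D : ℕ} (A : Fin d → Matrix (Fin D) (Fin D) ℂ) (L : ℕ) :
    Submodule ℂ (Matrix (Fin D) (Fin D) ℂ) :=
  Submodule.span ℂ {M | ∃ i : Fin L → Fin d, M = (List.ofFn fun k => A (i k)).prod}

lemma ofFn_cast_eq {α : Type*} {m N : ℕ} (h : N = m) (f : Fin m → α) :
    (List.ofFn fun k : Fin N => f (Fin.cast h k)) = List.ofFn f := by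
  subst h; simp

lemma trace_stdBasisMatrix_mul {D : ℕ} (β α : Fin D) (X : Matrix (Fin D) (Fin D) ℂ) :
    Matrix.trace (Matrix.single β α 1 * X) = X α β := by
  simp [Matrix.trace, Matrix.mul_apply, Matrix.single, ite_and,
    Finset.sum_ite_eq, Finset.sum_ite_eq']

lemma prodSpan_succ_top {d D : ℕ} (A : Fin d → Matrix (Fin D) (Fin D) ℂ)
    (hiso : (∑ i, A i * (A i)ᴴ) = 1) {L : ℕ} (hL : prodSpan A L = ⊤) :
    prodSpan A (L + 1) = ⊤ := by
  rw [eq_top_iff]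
  intro B _
  have key : ∀ i₀ : Fin d, ∀ X ∈ prodSpan A L, A i₀ * X ∈ prodSpan A (L + 1) := by
    intro i₀ X hX
    have hmap : (prodSpan A L).map (LinearMap.mulLeft ℂ (A i₀)) ≤ prodSpan A (L + 1) := by
      rw [prodSpan, Submodule.map_span, Submodule.span_le]
      rintro _ ⟨_, ⟨j, rfl⟩, rfl⟩
      apply Submodule.subset_span
      refine ⟨Fin.cons i₀ j, ?_⟩
      rw [List.ofFn_succ]
      simp [LinearMap.mulLeft_apply]
    exact hmap (Submodule.mem_map_of_mem hX)
  have hB : B = ∑ i, A i * ((A i)ᴴ * B) := by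
    calc B = (∑ i, A i * (A i)ᴴ) * B := by rw [hiso, one_mul]
    _ = ∑ i, A i * ((A i)ᴴ * B) := by rw [Finset.sum_mul]; simp [mul_assoc]
  rw [hB]
  exact Submodule.sum_mem _ fun i _ => key i _ (hL ▸ Submodule.mem_top)

lemma prodSpan_top_of_le {d D : ℕ} (A : Fin d → Matrix (Fin D) (Fin D) ℂ)
    (hiso : (∑ i, A i * (A i)ᴴ) = 1) {L0 L : ℕ} (hL0 : prodSpan A L0 = ⊤) (h : L0 ≤ L) :
    prodSpan A L = ⊤ := by
  induction L, h using Nat.le_induction with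
  | base => exact hL0
  | succ n hn ih => exact prodSpan_succ_top A hiso ih

theorem stmt_5 (N d D L0 : ℕ)
    (c : (Fin N → Fin d) → ℂ)
    (A : Fin d → Matrix (Fin D) (Fin D) ℂ)
    (hrep : ∀ i : Fin N → Fin d, c i = tiCoeff A i)
    (hiso : (∑ i, A i * (A i)ᴴ) = 1)
    (hC1 : Submodule.span ℂ
      {M : Matrix (Fin D) (Fin D) ℂ |
        ∃ i : Fin L0 → Fin d, M = (List.ofFn fun k => A (i k)).prod} = ⊤)
    (hL0 : L0 < N)
    (R : ℕ) (hR1 : L0 ≤ R) (hR2 : L0 ≤ N - R) (hRN : R ≤ N) :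
    (Matrix.of fun (a : Fin R → Fin d) (b : Fin (N - R) → Fin d) =>
      c (fun k => Fin.append a b (Fin.cast (by omega) k))).rank = D ^ 2 := by
  set n := N - R with hn
  have hC1' : prodSpan A L0 = ⊤ := hC1
  have hPR : prodSpan A R = ⊤ := prodSpan_top_of_le A hiso hC1' hR1
  have hPn : prodSpan A n = ⊤ := prodSpan_top_of_le A hiso hC1' hR2
  set P : (Fin R → Fin d) → Matrix (Fin D) (Fin D) ℂ :=
    fun a => (List.ofFn fun k => A (a k)).prod with hP
  set Q : (Fin n → Fin d) → Matrix (Fin D) (Fin D) ℂ :=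
    fun b => (List.ofFn fun k => A (b k)).prod with hQ
  set U : Matrix (Fin R → Fin d) (Fin D × Fin D) ℂ :=
    Matrix.of fun a p => P a p.2 p.1 with hU
  set V : Matrix (Fin D × Fin D) (Fin n → Fin d) ℂ :=
    Matrix.of fun p b => Q b p.1 p.2 with hV
  -- the coefficient matrix factorizes as U * V
  have hfact : (Matrix.of fun (a : Fin R → Fin d) (b : Fin (N - R) → Fin d) =>
      c (fun k => Fin.append a b (Fin.cast (by omega) k))) = U * V := by
    ext a b
    have e : R + n = N := by omega
    have hlist : (List.ofFn fun k : Fin N => A (Fin.append a b (Fin.cast e.symm k)))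
        = List.ofFn fun k : Fin (R + n) => A (Fin.append a b k) :=
      ofFn_cast_eq (m := R + n) e.symm (fun k => A (Fin.append a b k))
    rw [Matrix.of_apply, hrep, tiCoeff, hlist, List.ofFn_add, List.prod_append]
    have h1 : (List.ofFn fun i : Fin R => A (Fin.append a b (Fin.castLE (Nat.le_add_right R n) i)))
        = List.ofFn fun i : Fin R => A (a i) := by
      congr 1; funext i; exact congrArg A (Fin.append_left a b i)
    have h2 : (List.ofFn fun j : Fin n => A (Fin.append a b (Fin.natAdd R j)))
        = List.ofFn fun j : Fin n => A (b j) := by simp [Fin.append_right]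
    rw [h1, h2]
    rw [Matrix.mul_apply, Matrix.trace]
    rw [Fintype.sum_prod_type]
    simp only [Matrix.diag_apply, Matrix.mul_apply, Matrix.of_apply]
    rw [Finset.sum_comm]
    simp only [hU, hV, Matrix.of_apply]
    rfl
  rw [hfact, Matrix.rank, Matrix.mulVecLin_mul, LinearMap.range_comp]
  -- V is surjective
  have hVsurj : LinearMap.range V.mulVecLin = ⊤ := by
    rw [eq_top_iff]
    have hvec : (⊤ : Submodule ℂ (Fin D × Fin D → ℂ))
        = (prodSpan A n).map (((Matrix.ofLinearEquiv ℂ).symm.trans (LinearEquiv.curry ℂ ℂ (Fin D) (Fin D)).symm : Matrix (Fin D) (Fin D) ℂ ≃ₗ[ℂ] (Fin D × Fin D → ℂ)) : Matrix (Fin D) (Fin D) ℂ →ₗ[ℂ] (Fin D × Fin D → ℂ)) := by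
      rw [hPn, Submodule.map_top, LinearEquiv.range]
    rw [hvec]
    rw [prodSpan, Submodule.map_span, Submodule.span_le]
    rintro _ ⟨_, ⟨j, rfl⟩, rfl⟩
    refine ⟨Pi.single j 1, ?_⟩
    ext p
    simp [Matrix.mulVecLin, Matrix.mulVec, dotProduct, Pi.single_apply,
      LinearEquiv.curry, Function.uncurry, hV, hQ]
  rw [hVsurj, Submodule.map_top]
  -- U is injective
  have hUinj : Function.Injective U.mulVecLin := by
    rw [← LinearMap.ker_eq_bot, eq_bot_iff]
    intro v hv
    simp only [LinearMap.mem_ker] at hv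
    set X : Matrix (Fin D) (Fin D) ℂ := Matrix.of fun α β => v (α, β) with hX
    have htr : ∀ M ∈ prodSpan A R, Matrix.trace (M * X) = 0 := by
      intro M hM
      induction hM using Submodule.span_induction with
      | mem x hx =>
        obtain ⟨i, rfl⟩ := hx
        have := congrFun hv i
        simp only [Matrix.mulVecLin_apply, Pi.zero_apply] at this
        rw [← this]
        rw [Matrix.trace]
        simp only [Matrix.mulVec, dotProduct, Matrix.diag_apply, Matrix.mul_apply]
        rw [Fintype.sum_prod_type]
        rw [Finset.sum_comm]
        simp [hU, hP, hX, mul_comm]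
      | zero => simp
      | add x y hx hy ihx ihy => rw [add_mul, Matrix.trace_add, ihx, ihy, add_zero]
      | smul a x hx ih => rw [Matrix.smul_mul, Matrix.trace_smul, ih, smul_zero]
    have hX0 : X = 0 := by
      ext α β
      have := htr (Matrix.single β α 1) (hPR ▸ Submodule.mem_top)
      rw [trace_stdBasisMatrix_mul] at this
      simpa using this
    have hv0 : v = 0 := by
      ext p
      have h := congrFun (congrFun hX0 p.1) p.2
      simpa [hX] using h
    simp [hv0]
  rw [LinearMap.finrank_range_of_inj hUinj, Module.finrank_fintype_fun_eq_card]
  simp [pow_two]
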